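/- Let A_1 be self-adjoint with A_1 ≥ ν·I, ν > 0, η_1 ∈ (0,1), τ > 0, S_1 = (I + τ²η_1^{-1}A_1)^{-1}, and let S be bounded self-adjoint with I - S ≥ η_1(I - S_1) > 0. Then for all h ∈ H: ‖(I - S)^{-1/2} S_1 h‖ ≤ τ^{-1}‖A_1^{-1/2} S_1^{1/2} h‖ ≤ (τ√ν)^{-1}‖h‖. -/

import Mathlib

lemma commute_cfc_complex {A : Type*} [CStarAlgebra A] {a b : A}
    (h : Commute b a) (h' : Commute b (star a)) (f : ℂ → ℂ) : Commute b (cfc f a) := by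
  refine cfc_cases (fun x ↦ Commute b x) a f (by simp) fun hf hna ↦ ?_
  have hmem : cfcHom hna ⟨_, hf.restrict⟩ ∈ StarAlgebra.elemental ℂ a := by
    rw [cfcHom_eq_of_isStarNormal]
    exact Subtype.mem _
  have hcl : IsClosed {x : A | Commute b x} := by
    have : {x : A | Commute b x} = (fun x : A ↦ b * x - x * b) ⁻¹' {0} := by
      ext x; simp [Commute, SemiconjBy, sub_eq_zero]
    rw [this]
    exact isClosed_singleton.preimage (by fun_prop)
  exact StarAlgebra.elemental.induction_on (R := ℂ) hmem (P := fun u _ ↦ Commute b u)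
    h h' (fun r ↦ Algebra.commute_algebraMap_right r b)
    (fun u _ v _ hbu hbv ↦ hbu.add_right hbv)
    (fun u _ v _ hbu hbv ↦ hbu.mul_right hbv)
    (fun s hs hcomm v hv ↦ hcl.closure_subset_iff.mpr (fun u hu ↦ hcomm u hu) hv)

lemma commute_sqrt' {H : Type*} [NormedAddCommGroup H] [InnerProductSpace ℂ H] [CompleteSpace H]
    {a b : H →L[ℂ] H} (ha : 0 ≤ a) (h : Commute b a) : Commute b (CFC.sqrt a) := by
  have hsa : IsSelfAdjoint a := IsSelfAdjoint.of_nonneg ha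
  rw [CFC.sqrt_eq_cfc, cfc_nnreal_eq_real (⇑NNReal.sqrt) a ha, cfc_real_eq_complex _ hsa]
  exact commute_cfc_complex h (by rwa [hsa.star_eq]) _

lemma star_inv_eq' {A : Type*} [Ring A] [StarRing A] {a b : A}
    (h2 : a * b = 1) (ha : star a = a) : star b = b := by
  have h3 : star b * a = 1 := by
    have := congrArg star h2
    rwa [star_mul, star_one, ha] at this
  calc star b = star b * (a * b) := by rw [h2, mul_one]
  _ = (star b * a) * b := by rw [mul_assoc]
  _ = b := by rw [h3, one_mul]

set_option synthInstance.maxHeartbeats 1000000 in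
set_option maxHeartbeats 1000000 in
theorem inv_sqrt_one_sub_S_mul_S1_estimate {H : Type*} [NormedAddCommGroup H]
    [InnerProductSpace ℂ H] [CompleteSpace H]
    (A1 : H →L[ℂ] H) (hA1 : IsSelfAdjoint A1)
    (ν : ℝ) (hν : 0 < ν) (hlow : ∀ u : H, ν * ‖u‖ ^ 2 ≤ (inner ℂ (A1 u) u : ℂ).re)
    (η1 : ℝ) (hη1 : η1 ∈ Set.Ioo (0 : ℝ) 1) (τ : ℝ) (hτ : 0 < τ)
    (S1 : H →L[ℂ] H)
    (hS1 : S1 * (1 + (τ ^ 2 * η1⁻¹) • A1) = 1) (hS1' : (1 + (τ ^ 2 * η1⁻¹) • A1) * S1 = 1)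
    (S : H →L[ℂ] H) (hS : IsSelfAdjoint S)
    (hord : ∀ u : H, η1 * (inner ℂ ((1 - S1) u) u : ℂ).re ≤ (inner ℂ ((1 - S) u) u : ℂ).re)
    (hpos : ∀ u : H, u ≠ 0 → 0 < (inner ℂ ((1 - S1) u) u : ℂ).re)
    (T : H →L[ℂ] H) (hT : T * (1 - S) = 1) (hT' : (1 - S) * T = 1)
    (A1inv : H →L[ℂ] H) (hA1inv : A1 * A1inv = 1) (hA1inv' : A1inv * A1 = 1) :
    ∀ h : H,
      ‖CFC.sqrt T (S1 h)‖ ≤ τ⁻¹ * ‖CFC.sqrt A1inv (CFC.sqrt S1 h)‖ ∧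
      τ⁻¹ * ‖CFC.sqrt A1inv (CFC.sqrt S1 h)‖ ≤ (τ * Real.sqrt ν)⁻¹ * ‖h‖ := by
  intro h
  obtain ⟨hη1pos, hη1lt⟩ := hη1
  set c : ℝ := τ ^ 2 * η1⁻¹ with hc_def
  have hc : 0 < c := by positivity
  set P : H →L[ℂ] H := 1 + c • A1 with hP_def
  -- elementary inner-product helpers
  have reNorm : ∀ x : H, (inner ℂ x x : ℂ).re = ‖x‖ ^ 2 := fun x ↦ inner_self_eq_norm_sq (𝕜 := ℂ) x
  have reSymm : ∀ x y : H, (inner ℂ x y : ℂ).re = (inner ℂ y x : ℂ).re :=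
    fun x y ↦ inner_re_symm (𝕜 := ℂ) x y
  have reCS : ∀ x y : H, (inner ℂ x y : ℂ).re ≤ ‖x‖ * ‖y‖ := fun x y ↦ re_inner_le_norm (𝕜 := ℂ) x y
  have innerSmulR : ∀ (r : ℝ) (x y : H), (inner ℂ x (r • y) : ℂ) = (r : ℂ) * inner ℂ x y := by
    intro r x y
    rw [RCLike.real_smul_eq_coe_smul (K := ℂ) r y, inner_smul_right]
    norm_cast
  have innerSmulL : ∀ (r : ℝ) (x y : H), (inner ℂ (r • x) y : ℂ).re = r * (inner ℂ x y : ℂ).re := by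
    intro r x y
    rw [RCLike.real_smul_eq_coe_smul (K := ℂ) r x, inner_smul_left]
    simp
  have reCoeMul : ∀ (r : ℝ) (z : ℂ), ((r : ℂ) * z).re = r * z.re := by intro r z; simp
  have sym : ∀ (B : H →L[ℂ] H), IsSelfAdjoint B → ∀ x y : H,
      (inner ℂ (B x) y : ℂ) = inner ℂ x (B y) := by
    intro B hB x y
    have := hB.isSymmetric x y
    simpa using this
  have appInv : ∀ (X Y : H →L[ℂ] H), X * Y = 1 → ∀ x : H, X (Y x) = x := by
    intro X Y hXY x
    rw [← ContinuousLinearMap.mul_apply, hXY, ContinuousLinearMap.one_apply]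
  -- selfadjointness
  have hPsa : IsSelfAdjoint P := by
    rw [IsSelfAdjoint, hP_def, star_add, star_one, star_smul, star_trivial, hA1.star_eq]
  have hS1sa : IsSelfAdjoint S1 := star_inv_eq' hS1' hPsa.star_eq
  have h1Ssa : IsSelfAdjoint (1 - S) := (IsSelfAdjoint.one _).sub hS
  have hTsa : IsSelfAdjoint T := star_inv_eq' hT' h1Ssa.star_eq
  have hA1invsa : IsSelfAdjoint A1inv := star_inv_eq' hA1inv hA1.star_eq
  have h1S1sa : IsSelfAdjoint (1 - S1) := (IsSelfAdjoint.one _).sub hS1sa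
  -- commutation
  have hPA : A1 * P = P * A1 := by
    rw [hP_def]; simp only [mul_add, add_mul, mul_one, one_mul, mul_smul_comm, smul_mul_assoc]
  have hS1A1 : S1 * A1 = A1 * S1 := by
    calc S1 * A1 = S1 * A1 * (P * S1) := by rw [hS1', mul_one]
    _ = S1 * (A1 * P) * S1 := by noncomm_ring
    _ = S1 * (P * A1) * S1 := by rw [hPA]
    _ = (S1 * P) * (A1 * S1) := by noncomm_ring
    _ = A1 * S1 := by rw [hS1, one_mul]
  have hS1A1inv : A1inv * S1 = S1 * A1inv := by
    calc A1inv * S1 = A1inv * S1 * (A1 * A1inv) := by rw [hA1inv, mul_one]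
    _ = A1inv * (S1 * A1) * A1inv := by noncomm_ring
    _ = A1inv * (A1 * S1) * A1inv := by rw [hS1A1]
    _ = (A1inv * A1) * (S1 * A1inv) := by noncomm_ring
    _ = S1 * A1inv := by rw [hA1inv', one_mul]
  -- real-part facts
  have hA1re : ∀ w : H, 0 ≤ (inner ℂ (A1 w) w : ℂ).re := fun w ↦
    le_trans (by positivity) (hlow w)
  have hPapp : ∀ w : H, P w = w + c • A1 w := by
    intro w
    simp [hP_def]
  have ePw : ∀ w : H, (inner ℂ w (P w) : ℂ).re = ‖w‖ ^ 2 + c * (inner ℂ (A1 w) w : ℂ).re := by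
    intro w
    rw [hPapp w, inner_add_right, innerSmulR, Complex.add_re, reNorm, reCoeMul,
      reSymm w (A1 w)]
  -- nonnegativity in the Loewner order
  have hS1nn : (0 : H →L[ℂ] H) ≤ S1 := by
    rw [ContinuousLinearMap.nonneg_iff_isPositive]
    refine ⟨hS1sa.isSymmetric, fun x ↦ ?_⟩
    show (0 : ℝ) ≤ (inner ℂ (S1 x) x : ℂ).re
    have e1 : (inner ℂ (S1 x) x : ℂ) = inner ℂ (S1 x) (P (S1 x)) := by
      rw [appInv P S1 hS1' x]
    rw [e1, ePw (S1 x)]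
    have := hA1re (S1 x)
    positivity
  have hTnn : (0 : H →L[ℂ] H) ≤ T := by
    rw [ContinuousLinearMap.nonneg_iff_isPositive]
    refine ⟨hTsa.isSymmetric, fun x ↦ ?_⟩
    show (0 : ℝ) ≤ (inner ℂ (T x) x : ℂ).re
    have e1 : (inner ℂ (T x) x : ℂ).re = (inner ℂ ((1 - S) (T x)) (T x) : ℂ).re := by
      rw [appInv _ _ hT' x]
      exact reSymm _ _
    rw [e1]
    rcases eq_or_ne (T x) 0 with hw0 | hw0
    · simp [hw0]
    · have h2 := hord (T x)
      have h3 := hpos (T x) hw0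
      nlinarith
  have hA1invnn : (0 : H →L[ℂ] H) ≤ A1inv := by
    rw [ContinuousLinearMap.nonneg_iff_isPositive]
    refine ⟨hA1invsa.isSymmetric, fun x ↦ ?_⟩
    show (0 : ℝ) ≤ (inner ℂ (A1inv x) x : ℂ).re
    have e1 : (inner ℂ (A1inv x) x : ℂ).re = (inner ℂ (A1 (A1inv x)) (A1inv x) : ℂ).re := by
      rw [appInv _ _ hA1inv x]
      exact reSymm _ _
    rw [e1]
    exact hA1re _
  have h1S1nn : (0 : H →L[ℂ] H) ≤ 1 - S1 := by
    rw [ContinuousLinearMap.nonneg_iff_isPositive]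
    refine ⟨h1S1sa.isSymmetric, fun x ↦ ?_⟩
    show (0 : ℝ) ≤ (inner ℂ ((1 - S1) x) x : ℂ).re
    rcases eq_or_ne x 0 with hx0 | hx0
    · simp [hx0]
    · exact (hpos x hx0).le
  -- norm of sqrt applied
  have nsq : ∀ (X : H →L[ℂ] H), 0 ≤ X → ∀ u : H,
      ‖CFC.sqrt X u‖ ^ 2 = (inner ℂ (X u) u : ℂ).re := by
    intro X hX u
    have h1 : IsSelfAdjoint (CFC.sqrt X) := IsSelfAdjoint.of_nonneg (CFC.sqrt_nonneg X)
    have h2 : CFC.sqrt X (CFC.sqrt X u) = X u := by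
      conv_rhs => rw [← CFC.sqrt_mul_sqrt_self X hX]
      rfl
    calc ‖CFC.sqrt X u‖ ^ 2 = (inner ℂ (CFC.sqrt X u) (CFC.sqrt X u) : ℂ).re :=
          (reNorm _).symm
    _ = (inner ℂ u (X u) : ℂ).re := by rw [sym _ h1 u (CFC.sqrt X u), h2]
    _ = (inner ℂ (X u) u : ℂ).re := reSymm _ _
  -- pointwise square-root identities
  have hQssa : IsSelfAdjoint (CFC.sqrt S1) := IsSelfAdjoint.of_nonneg (CFC.sqrt_nonneg S1)
  have hQBsa : IsSelfAdjoint (CFC.sqrt (1 - S1)) := IsSelfAdjoint.of_nonneg (CFC.sqrt_nonneg (1 - S1))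
  have hQsQs : ∀ z : H, CFC.sqrt S1 (CFC.sqrt S1 z) = S1 z := by
    intro z
    conv_rhs => rw [← CFC.sqrt_mul_sqrt_self S1 hS1nn]
    rfl
  have hQQ : ∀ z : H, CFC.sqrt (1 - S1) (CFC.sqrt (1 - S1) z) = (1 - S1) z := by
    intro z
    conv_rhs => rw [← CFC.sqrt_mul_sqrt_self (1 - S1) h1S1nn]
    rfl
  have hQscomm : ∀ z : H, A1inv (CFC.sqrt S1 z) = CFC.sqrt S1 (A1inv z) := by
    intro z
    exact DFunLike.congr_fun (commute_sqrt' hS1nn hS1A1inv) z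
  have hS1A1invApp : ∀ z : H, A1inv (S1 z) = S1 (A1inv z) := fun z ↦
    DFunLike.congr_fun hS1A1inv z
  ----------------------------------------------------------------
  -- Part 2
  ----------------------------------------------------------------
  have hS1h : ∀ z : H, ‖S1 z‖ ≤ ‖z‖ := by
    intro z
    have e1 : (inner ℂ (S1 z) (P (S1 z)) : ℂ).re = (inner ℂ (S1 z) z : ℂ).re := by
      rw [appInv P S1 hS1' z]
    have e2 := ePw (S1 z)
    have e3 : ‖S1 z‖ ^ 2 + c * (inner ℂ (A1 (S1 z)) (S1 z) : ℂ).re ≤ ‖S1 z‖ * ‖z‖ := by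
      rw [← e2, e1]; exact reCS _ _
    have e4 := hA1re (S1 z)
    nlinarith [norm_nonneg (S1 z), norm_nonneg z]
  have hxh : ‖CFC.sqrt S1 h‖ ≤ ‖h‖ := by
    have e1 : ‖CFC.sqrt S1 h‖ ^ 2 = (inner ℂ (S1 h) h : ℂ).re := nsq S1 hS1nn h
    have e2 : (inner ℂ (S1 h) h : ℂ).re ≤ ‖S1 h‖ * ‖h‖ := reCS _ _
    have e3 := hS1h h
    nlinarith [norm_nonneg (CFC.sqrt S1 h), norm_nonneg h]
  have hA1invz : ∀ z : H, ‖A1inv z‖ ≤ ν⁻¹ * ‖z‖ := by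
    intro z
    have h1 := hlow (A1inv z)
    rw [appInv _ _ hA1inv z] at h1
    have h2 : (inner ℂ z (A1inv z) : ℂ).re ≤ ‖z‖ * ‖A1inv z‖ := reCS _ _
    rcases eq_or_lt_of_le (norm_nonneg (A1inv z)) with h0 | h0
    · rw [← h0]; positivity
    · have h3 : ν * ‖A1inv z‖ ≤ ‖z‖ := by nlinarith
      calc ‖A1inv z‖ = ν⁻¹ * (ν * ‖A1inv z‖) := by field_simp
      _ ≤ ν⁻¹ * ‖z‖ := mul_le_mul_of_nonneg_left h3 (by positivity)
  have hsqA1inv : ∀ z : H, ‖CFC.sqrt A1inv z‖ ≤ Real.sqrt ν⁻¹ * ‖z‖ := by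
    intro z
    have e1 : ‖CFC.sqrt A1inv z‖ ^ 2 = (inner ℂ (A1inv z) z : ℂ).re := nsq _ hA1invnn z
    have e2 : (inner ℂ (A1inv z) z : ℂ).re ≤ ‖A1inv z‖ * ‖z‖ := reCS _ _
    have e3 : ‖CFC.sqrt A1inv z‖ ^ 2 ≤ ν⁻¹ * ‖z‖ ^ 2 := by
      nlinarith [hA1invz z, norm_nonneg z, norm_nonneg (A1inv z)]
    calc ‖CFC.sqrt A1inv z‖ = Real.sqrt (‖CFC.sqrt A1inv z‖ ^ 2) :=
          (Real.sqrt_sq (norm_nonneg _)).symm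
    _ ≤ Real.sqrt (ν⁻¹ * ‖z‖ ^ 2) := Real.sqrt_le_sqrt e3
    _ = Real.sqrt ν⁻¹ * ‖z‖ := by rw [Real.sqrt_mul (by positivity), Real.sqrt_sq (norm_nonneg z)]
  have part2 : τ⁻¹ * ‖CFC.sqrt A1inv (CFC.sqrt S1 h)‖ ≤ (τ * Real.sqrt ν)⁻¹ * ‖h‖ := by
    have e2 : ‖CFC.sqrt A1inv (CFC.sqrt S1 h)‖ ≤ Real.sqrt ν⁻¹ * ‖h‖ :=
      (hsqA1inv (CFC.sqrt S1 h)).trans (mul_le_mul_of_nonneg_left hxh (Real.sqrt_nonneg _))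
    have e3 : (τ * Real.sqrt ν)⁻¹ = τ⁻¹ * Real.sqrt ν⁻¹ := by rw [mul_inv, Real.sqrt_inv]
    rw [e3, mul_assoc]
    exact mul_le_mul_of_nonneg_left e2 (by positivity)
  ----------------------------------------------------------------
  -- Part 1
  ----------------------------------------------------------------
  set w0 : H := (τ ^ 2)⁻¹ • A1inv h with hw0_def
  have hBop : (1 - S1 : H →L[ℂ] H) = c • (A1 * S1) := by
    have h0 := hS1'
    rw [hP_def, add_mul, one_mul, smul_mul_assoc] at h0
    exact (eq_sub_of_add_eq' h0).symm
  have hBA1inv : (1 - S1) w0 = η1⁻¹ • S1 h := by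
    rw [hw0_def, ContinuousLinearMap.map_smul_of_tower, hBop, ContinuousLinearMap.smul_apply,
      ContinuousLinearMap.mul_apply, ← hS1A1invApp h, appInv _ _ hA1inv (S1 h), smul_smul]
    congr 1
    rw [hc_def]
    field_simp
  have hvBw : S1 h = η1 • ((1 - S1) w0) := by
    rw [hBA1inv, smul_smul, mul_inv_cancel₀ hη1pos.ne', one_smul]
  -- abbreviations (plain terms)
  have hα : ‖CFC.sqrt T (S1 h)‖ ^ 2 = (inner ℂ (T (S1 h)) (S1 h) : ℂ).re := nsq T hTnn (S1 h)
  have hβm : ‖CFC.sqrt A1inv (CFC.sqrt S1 h)‖ ^ 2 = (inner ℂ (A1inv (S1 h)) h : ℂ).re := by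
    calc ‖CFC.sqrt A1inv (CFC.sqrt S1 h)‖ ^ 2
        = (inner ℂ (A1inv (CFC.sqrt S1 h)) (CFC.sqrt S1 h) : ℂ).re := nsq _ hA1invnn _
    _ = (inner ℂ (CFC.sqrt S1 (A1inv (CFC.sqrt S1 h))) h : ℂ).re := by
        rw [(sym _ hQssa (A1inv (CFC.sqrt S1 h)) h).symm]
    _ = (inner ℂ (A1inv (S1 h)) h : ℂ).re := by rw [← hQscomm, hQsQs]
  have ha' : (inner ℂ ((1 - S) (T (S1 h))) (T (S1 h)) : ℂ).re
      = (inner ℂ (T (S1 h)) (S1 h) : ℂ).re := by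
    rw [appInv _ _ hT' (S1 h)]
    exact reSymm _ _
  have hp2 : ‖CFC.sqrt (1 - S1) (T (S1 h))‖ ^ 2 ≤ η1⁻¹ * (inner ℂ (T (S1 h)) (S1 h) : ℂ).re := by
    have e1 : ‖CFC.sqrt (1 - S1) (T (S1 h))‖ ^ 2
        = (inner ℂ ((1 - S1) (T (S1 h))) (T (S1 h)) : ℂ).re := nsq _ h1S1nn _
    have e2 := hord (T (S1 h))
    rw [ha'] at e2
    rw [e1]
    have e3 := mul_le_mul_of_nonneg_left e2 (inv_nonneg.mpr hη1pos.le)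
    rwa [← mul_assoc, inv_mul_cancel₀ hη1pos.ne', one_mul] at e3
  have hq2 : ‖CFC.sqrt (1 - S1) w0‖ ^ 2
      = η1⁻¹ * ((τ ^ 2)⁻¹ * (inner ℂ (A1inv (S1 h)) h : ℂ).re) := by
    have e1 : ‖CFC.sqrt (1 - S1) w0‖ ^ 2 = (inner ℂ ((1 - S1) w0) w0 : ℂ).re := nsq _ h1S1nn _
    have e2 : (inner ℂ (A1inv h) (S1 h) : ℂ) = inner ℂ (A1inv (S1 h)) h := by
      rw [hS1A1invApp h]
      exact (sym S1 hS1sa (A1inv h) h).symm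
    rw [e1, reSymm, hBA1inv, innerSmulR, reCoeMul, hw0_def, innerSmulL, e2]
  have hCS : (inner ℂ (T (S1 h)) (S1 h) : ℂ).re
      ≤ η1 * (‖CFC.sqrt (1 - S1) (T (S1 h))‖ * ‖CFC.sqrt (1 - S1) w0‖) := by
    have c1 : ∀ z : H, (inner ℂ z (S1 h) : ℂ) = (η1 : ℂ) * inner ℂ z ((1 - S1) w0) := by
      intro z
      conv_lhs => rw [hvBw]
      exact innerSmulR _ _ _
    have c2 : (inner ℂ (T (S1 h)) ((1 - S1) w0) : ℂ)
        = inner ℂ (CFC.sqrt (1 - S1) (T (S1 h))) (CFC.sqrt (1 - S1) w0) := by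
      rw [← hQQ w0]
      exact (sym _ hQBsa (T (S1 h)) (CFC.sqrt (1 - S1) w0)).symm
    calc (inner ℂ (T (S1 h)) (S1 h) : ℂ).re
        = η1 * (inner ℂ (T (S1 h)) ((1 - S1) w0) : ℂ).re := by rw [c1 (T (S1 h)), reCoeMul]
    _ = η1 * (inner ℂ (CFC.sqrt (1 - S1) (T (S1 h))) (CFC.sqrt (1 - S1) w0) : ℂ).re := by rw [c2]
    _ ≤ η1 * (‖CFC.sqrt (1 - S1) (T (S1 h))‖ * ‖CFC.sqrt (1 - S1) w0‖) :=
        mul_le_mul_of_nonneg_left (reCS _ _) hη1pos.le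
  -- numeric conclusion for part 1
  have part1 : ‖CFC.sqrt T (S1 h)‖ ≤ τ⁻¹ * ‖CFC.sqrt A1inv (CFC.sqrt S1 h)‖ := by
    set a : ℝ := (inner ℂ (T (S1 h)) (S1 h) : ℂ).re with ha_def
    set m : ℝ := (inner ℂ (A1inv (S1 h)) h : ℂ).re with hm_def
    set p : ℝ := ‖CFC.sqrt (1 - S1) (T (S1 h))‖ with hp_def
    set q : ℝ := ‖CFC.sqrt (1 - S1) w0‖ with hq_def
    set α : ℝ := ‖CFC.sqrt T (S1 h)‖ with hαdef
    set β : ℝ := ‖CFC.sqrt A1inv (CFC.sqrt S1 h)‖ with hβdef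
    have ha0 : 0 ≤ a := by rw [← hα]; positivity
    have hm0 : 0 ≤ m := by rw [← hβm]; positivity
    have key : a ≤ (τ ^ 2)⁻¹ * m := by
      rcases ha0.eq_or_lt with h0 | h0
      · rw [← h0]; positivity
      · have s1 : η1 ^ 2 * p ^ 2 ≤ η1 ^ 2 * (η1⁻¹ * a) := mul_le_mul_of_nonneg_left hp2 (sq_nonneg η1)
        have s2 : η1 ^ 2 * p ^ 2 * q ^ 2 ≤ η1 ^ 2 * (η1⁻¹ * a) * q ^ 2 :=
          mul_le_mul_of_nonneg_right s1 (sq_nonneg q)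
        have hsq : a ^ 2 ≤ a * ((τ ^ 2)⁻¹ * m) := by
          calc a ^ 2 ≤ (η1 * (p * q)) ^ 2 := pow_le_pow_left₀ ha0 hCS 2
          _ = η1 ^ 2 * p ^ 2 * q ^ 2 := by ring
          _ ≤ η1 ^ 2 * (η1⁻¹ * a) * q ^ 2 := s2
          _ = η1 ^ 2 * (η1⁻¹ * a) * (η1⁻¹ * ((τ ^ 2)⁻¹ * m)) := by rw [hq2]
          _ = a * ((τ ^ 2)⁻¹ * m) := by field_simp
        have hsq' : a * a ≤ a * ((τ ^ 2)⁻¹ * m) := by rwa [← pow_two]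
        exact le_of_mul_le_mul_left hsq' h0
    have hfin : α ^ 2 ≤ (τ⁻¹ * β) ^ 2 := by
      calc α ^ 2 = a := hα
      _ ≤ (τ ^ 2)⁻¹ * m := key
      _ = (τ⁻¹ * β) ^ 2 := by rw [← hβm]; ring
    calc α = Real.sqrt (α ^ 2) := (Real.sqrt_sq (norm_nonneg _)).symm
    _ ≤ Real.sqrt ((τ⁻¹ * β) ^ 2) := Real.sqrt_le_sqrt hfin
    _ = τ⁻¹ * β := Real.sqrt_sq (by positivity)
  exact ⟨part1, part2⟩
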